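/- For every n ≥ 1, the element d^{2^n} belongs to Stab_G(3n+2) but not to Stab_G(3n+3); that is, d^{2^n} fixes every word of length 3n+2 but moves some word of length 3n+3. -/
import Mathlib


namespace BVTree

/-- States of the automaton (generators, their inverses, and the identity). -/
inductive Q : Type
  | e | qa | qb | qc | qd | qa' | qb' | qc' | qd'
  deriving DecidableEq

open Q

/-- Output function of the automaton. -/
def Qout : Q → Bool → Bool
  | qa, x => !x
  | qa', x => !x
  | _, x => x

/-- Transition function of the automaton. -/
def Qtrans : Q → Bool → Q
  | qa, false => qd
  | qa, true => e
  | qb, false => qa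
  | qb, true => qc
  | qc, _ => qa
  | qd, false => e
  | qd, true => qb
  | qa', false => e
  | qa', true => qd'
  | qb', false => qa'
  | qb', true => qc'
  | qc', _ => qa'
  | qd', false => e
  | qd', true => qb'
  | e, _ => e

/-- The state corresponding to the inverse automorphism. -/
def Qinv : Q → Q
  | e => e
  | qa => qa' | qb => qb' | qc => qc' | qd => qd'
  | qa' => qa | qb' => qb | qc' => qc | qd' => qd

/-- The action of a state on finite binary words. -/
def act : Q → List Bool → List Bool
  | _, [] => []
  | q, x :: w => Qout q x :: act (Qtrans q x) w

lemma act_inv (q : Q) : ∀ w, act (Qinv q) (act q w) = w := by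
  intro w
  induction w generalizing q with
  | nil => rfl
  | cons x w ih =>
    have h1 : Qout (Qinv q) (Qout q x) = x := by cases q <;> cases x <;> rfl
    have h2 : Qtrans (Qinv q) (Qout q x) = Qinv (Qtrans q x) := by
      cases q <;> cases x <;> rfl
    simp [act, h1, h2, ih]

/-- The tree automorphism determined by a state of the automaton. -/
def aut (q : Q) : Equiv.Perm (List Bool) where
  toFun := act q
  invFun := act (Qinv q)
  left_inv := act_inv q
  right_inv := by
    intro w
    have h : Qinv (Qinv q) = q := by cases q <;> rfl
    simpa [h] using act_inv (Qinv q) w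

/-- The automorphism `a`: `a(0w) = 1·d(w)`, `a(1w) = 0·w`. -/
def a : Equiv.Perm (List Bool) := aut qa
/-- The automorphism `b`: `b(0w) = 0·a(w)`, `b(1w) = 1·c(w)`. -/
def b : Equiv.Perm (List Bool) := aut qb
/-- The automorphism `c`: `c(0w) = 0·a(w)`, `c(1w) = 1·a(w)`. -/
def c : Equiv.Perm (List Bool) := aut qc
/-- The automorphism `d`: `d(0w) = 0·w`, `d(1w) = 1·b(w)`. -/
def d : Equiv.Perm (List Bool) := aut qd

/-- The group `G` generated by `a`, `b`, `c`, `d`. -/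
def G : Subgroup (Equiv.Perm (List Bool)) := Subgroup.closure {a, b, c, d}


lemma aut_apply (q : Q) (v : List Bool) : aut q v = act q v := rfl

lemma act_e : ∀ w, act e w = w
  | [] => rfl
  | x :: w => by simp [act, Qout, Qtrans, act_e w]

lemma d_false (w : List Bool) : d (false :: w) = false :: w := by
  show act qd (false :: w) = false :: w
  simp [act, Qout, Qtrans, act_e]

lemma d_true (w : List Bool) : d (true :: w) = true :: b w := rfl

lemma b_false (w : List Bool) : b (false :: w) = false :: a w := rfl

lemma b_true (w : List Bool) : b (true :: w) = true :: c w := rfl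

lemma c_cons (x : Bool) (w : List Bool) : c (x :: w) = x :: a w := by
  cases x <;> rfl

lemma a_false (w : List Bool) : a (false :: w) = true :: d w := rfl

lemma a_true (w : List Bool) : a (true :: w) = false :: w := by
  show act qa (true :: w) = false :: w
  simp [act, Qout, Qtrans, act_e]

lemma a_sq (x : Bool) (w : List Bool) : (a * a) (x :: w) = x :: d w := by
  cases x
  · rw [Equiv.Perm.mul_apply, a_false, a_true]
  · rw [Equiv.Perm.mul_apply, a_true, a_false]

lemma pow_nil (q : Q) (k : ℕ) : ((aut q) ^ k) ([] : List Bool) = [] := by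
  induction k with
  | zero => rfl
  | succ k ih => rw [pow_succ, Equiv.Perm.mul_apply]; exact (aut_apply q []) ▸ ih

lemma dpow_false (k : ℕ) (w : List Bool) : (d ^ k) (false :: w) = false :: w := by
  induction k with
  | zero => rfl
  | succ k ih => rw [pow_succ, Equiv.Perm.mul_apply, d_false, ih]

lemma dpow_true (k : ℕ) (w : List Bool) : (d ^ k) (true :: w) = true :: (b ^ k) w := by
  induction k generalizing w with
  | zero => rfl
  | succ k ih =>
    rw [pow_succ, Equiv.Perm.mul_apply, d_true, ih, pow_succ, Equiv.Perm.mul_apply]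

lemma bpow_false (k : ℕ) (w : List Bool) : (b ^ k) (false :: w) = false :: (a ^ k) w := by
  induction k generalizing w with
  | zero => rfl
  | succ k ih =>
    rw [pow_succ, Equiv.Perm.mul_apply, b_false, ih, pow_succ, Equiv.Perm.mul_apply]

lemma bpow_true (k : ℕ) (w : List Bool) : (b ^ k) (true :: w) = true :: (c ^ k) w := by
  induction k generalizing w with
  | zero => rfl
  | succ k ih =>
    rw [pow_succ, Equiv.Perm.mul_apply, b_true, ih, pow_succ, Equiv.Perm.mul_apply]

lemma cpow_cons (k : ℕ) (x : Bool) (w : List Bool) :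
    (c ^ k) (x :: w) = x :: (a ^ k) w := by
  induction k generalizing w with
  | zero => rfl
  | succ k ih =>
    rw [pow_succ, Equiv.Perm.mul_apply, c_cons, ih, pow_succ, Equiv.Perm.mul_apply]

lemma apow_two_mul (k : ℕ) (x : Bool) (w : List Bool) :
    (a ^ (2 * k)) (x :: w) = x :: (d ^ k) w := by
  induction k generalizing w with
  | zero => rfl
  | succ k ih =>
    have h2 : a ^ (2 * (k + 1)) = a ^ (2 * k) * (a * a) := by
      rw [show 2 * (k + 1) = 2 * k + 2 from by ring, pow_add, sq]
    rw [h2, Equiv.Perm.mul_apply, a_sq, ih, pow_succ, Equiv.Perm.mul_apply]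

lemma dfix : ∀ n : ℕ, ∀ v : List Bool, v.length ≤ 3 * n + 2 → (d ^ 2 ^ n) v = v := by
  intro n
  induction n with
  | zero =>
    intro v hv
    simp only [pow_zero, pow_one]
    match v, hv with
    | [], _ => rfl
    | false :: w, _ => exact d_false w
    | true :: [], _ => rfl
    | true :: false :: [], _ => rfl
    | true :: true :: [], _ => rfl
    | true :: _ :: _ :: _, hv => simp at hv
  | succ n ih =>
    have afix : ∀ w : List Bool, w.length ≤ 3 * (n + 1) → (a ^ 2 ^ (n + 1)) w = w := by
      intro w hw
      match w, hw with
      | [], _ => exact pow_nil qa _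
      | x :: w, hw =>
        have h2 : (2 : ℕ) ^ (n + 1) = 2 * 2 ^ n := by rw [pow_succ]; ring
        rw [h2, apow_two_mul, ih w (by simp at hw; omega)]
    intro v hv
    match v, hv with
    | [], _ => exact pow_nil qd _
    | false :: w, _ => exact dpow_false _ w
    | true :: [], _ => rw [dpow_true]; exact congrArg _ (pow_nil qb _)
    | true :: false :: w, hv =>
      rw [dpow_true, bpow_false, afix w (by simp at hv; omega)]
    | true :: true :: [], _ =>
      rw [dpow_true, bpow_true]; exact congrArg _ (congrArg _ (pow_nil qc _))
    | true :: true :: x :: w, hv =>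
      rw [dpow_true, bpow_true, cpow_cons, afix w (by simp at hv; omega)]

/-- The witness word of length `3n+3` moved by `d^{2^n}`. -/
def vword : ℕ → List Bool
  | 0 => [true, false, false]
  | n + 1 => true :: false :: false :: vword n

lemma vword_length (n : ℕ) : (vword n).length = 3 * n + 3 := by
  induction n with
  | zero => rfl
  | succ n ih => simp [vword, ih]; ring

lemma dmove : ∀ n : ℕ, (d ^ 2 ^ n) (vword n) ≠ vword n := by
  intro n
  induction n with
  | zero =>
    simp only [pow_zero, pow_one, vword]
    have : d [true, false, false] = [true, false, true] := rfl
    rw [this]; decide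
  | succ n ih =>
    show (d ^ 2 ^ (n + 1)) (true :: false :: false :: vword n) ≠ true :: false :: false :: vword n
    have h2 : (2 : ℕ) ^ (n + 1) = 2 * 2 ^ n := by rw [pow_succ]; ring
    rw [dpow_true, bpow_false, h2, apow_two_mul]
    intro h
    simp only [List.cons.injEq] at h
    exact ih h.2.2.2

/-- for `n ≥ 1`, `d^{2^n}` fixes level `3n+2` but moves some word of
length `3n+3`. -/
theorem d_pow_level_stabilizer (n : ℕ) (hn : 1 ≤ n) :
    (∀ v : List Bool, v.length = 3 * n + 2 → (d ^ (2 ^ n)) v = v) ∧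
    (∃ v : List Bool, v.length = 3 * n + 3 ∧ (d ^ (2 ^ n)) v ≠ v) := by
  refine ⟨fun v hv => dfix n v (le_of_eq hv), vword n, vword_length n, dmove n⟩

end BVTree
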